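/- Let R be a commutative Noetherian local ring with maximal ideal m, let Λ be a set, and for each λ ∈ Λ let P_λ be a prime ideal of R with P_λ ≠ m. Then every R-linear map from E(R/m) to the direct sum ⊕_{λ∈Λ} E(R/P_λ) is zero. -/

import Mathlib

/-- `E` is an injective hull of the `R`-module `M`: `E` is injective and `M` embeds into `E`
as an essential submodule. -/
def IsInjectiveHull (R : Type*) [CommRing R] (M E : Type*)
    [AddCommGroup M] [Module R M] [AddCommGroup E] [Module R E] : Prop :=
  Module.Injective R E ∧
    ∃ i : M →ₗ[R] E, Function.Injective i ∧
      ∀ N : Submodule R E, N ≠ ⊥ → N ⊓ LinearMap.range i ≠ ⊥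

private lemma aux_pow_smul {R M : Type*} [CommRing R] [AddCommGroup M] [Module R M]
    {z : R} (h : ∀ y : M, z • y = 0 → y = 0) {y : M} {n : ℕ} (hn : z ^ n • y = 0) : y = 0 := by
  induction n with
  | zero => simpa using hn
  | succ n ih =>
      refine ih (h _ ?_)
      rw [smul_smul, ← pow_succ']
      exact hn

private lemma aux_torsion {R : Type*} [CommRing R] [IsNoetherianRing R]
    {E₀ : Type*} [AddCommGroup E₀] [Module R E₀]
    {I : Ideal R} (i : (R ⧸ I) →ₗ[R] E₀) (hi : Function.Injective i)
    (hess : ∀ N : Submodule R E₀, N ≠ ⊥ → N ⊓ LinearMap.range i ≠ ⊥)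
    (z : R) (hz : z ∈ I) (x : E₀) : ∃ n : ℕ, z ^ n • x = 0 := by
  set c : ℕ →o Submodule R R :=
    ⟨fun k => LinearMap.ker (LinearMap.toSpanSingleton R E₀ (z ^ k • x)), by
      intro a b hab
      induction b with
      | zero => simp_all
      | succ b ihb =>
          rcases Nat.lt_or_ge a (b+1) with hlt | hge
          · refine le_trans (ihb (Nat.lt_succ_iff.mp hlt)) ?_
            intro r hr
            simp only [LinearMap.mem_ker, LinearMap.toSpanSingleton_apply] at hr ⊢
            rw [pow_succ', mul_smul, smul_comm, hr, smul_zero]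
          · have : a = b + 1 := le_antisymm hab hge
            subst this; exact le_rfl⟩ with hc
  obtain ⟨n, hn⟩ := (monotone_stabilizes_iff_noetherian.mpr inferInstance) c
  refine ⟨n, ?_⟩
  by_contra hx
  have hN : Submodule.span R {z ^ n • x} ≠ ⊥ := by
    simpa [Submodule.span_singleton_eq_bot] using hx
  obtain ⟨w, hw, hw0⟩ := Submodule.exists_mem_ne_zero_of_ne_bot (hess _ hN)
  obtain ⟨hw1, hw2⟩ := Submodule.mem_inf.mp hw
  obtain ⟨r, hr⟩ := Submodule.mem_span_singleton.mp hw1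
  obtain ⟨a, ha⟩ := hw2
  have hza : z • a = 0 := by
    have : z • a = (Ideal.Quotient.mk I z) * a := by
      rw [← Ideal.Quotient.algebraMap_eq, ← Algebra.smul_def]
    rw [this, Ideal.Quotient.eq_zero_iff_mem.mpr hz, zero_mul]
  have hzw : z • w = 0 := by
    rw [← ha, ← map_smul, hza, map_zero]
  have hrmem : r ∈ c (n + 1) := by
    change r ∈ LinearMap.ker (LinearMap.toSpanSingleton R E₀ (z ^ (n + 1) • x))
    simp only [hc, OrderHom.coe_mk, LinearMap.mem_ker, LinearMap.toSpanSingleton_apply]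
    rw [pow_succ', mul_smul, smul_comm]
    rw [← hr] at hzw
    rw [smul_comm z r]
    rwa [smul_comm] at hzw
  have hrmem' : r ∈ c n := by rw [hn (n + 1) (Nat.le_succ n)]; exact hrmem
  apply hw0
  rw [← hr]
  change r ∈ LinearMap.ker (LinearMap.toSpanSingleton R E₀ (z ^ n • x)) at hrmem'
  simpa [hc, LinearMap.toSpanSingleton_apply] using hrmem'

private lemma aux_inj {R : Type*} [CommRing R] {El : Type*} [AddCommGroup El] [Module R El]
    {P : Ideal R} (hP : P.IsPrime)
    (i : (R ⧸ P) →ₗ[R] El) (hi : Function.Injective i)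
    (hess : ∀ N : Submodule R El, N ≠ ⊥ → N ⊓ LinearMap.range i ≠ ⊥)
    (z : R) (hz : z ∉ P) : ∀ y : El, z • y = 0 → y = 0 := by
  intro y hy
  by_contra hy0
  have hN : Submodule.span R {y} ≠ ⊥ := by
    simpa [Submodule.span_singleton_eq_bot] using hy0
  obtain ⟨w, hw, hw0⟩ := Submodule.exists_mem_ne_zero_of_ne_bot (hess _ hN)
  obtain ⟨hw1, hw2⟩ := Submodule.mem_inf.mp hw
  obtain ⟨r, hr⟩ := Submodule.mem_span_singleton.mp hw1
  obtain ⟨a, ha⟩ := hw2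
  have hzw : z • w = 0 := by rw [← hr, smul_comm, hy, smul_zero]
  have hza : z • a = 0 := by
    apply hi; rw [map_smul, ha, map_zero]; exact hzw
  haveI := hP
  have hmul : (Ideal.Quotient.mk P z) * a = 0 := by
    rw [← Ideal.Quotient.algebraMap_eq, ← Algebra.smul_def]; exact hza
  have ha0 : a = 0 := by
    rcases mul_eq_zero.mp hmul with h | h
    · exact absurd (Ideal.Quotient.eq_zero_iff_mem.mp h) hz
    · exact h
  exact hw0 (by rw [← ha, ha0, map_zero])

theorem stmt_3 (R : Type*) [CommRing R] [IsNoetherianRing R] [IsLocalRing R]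
    (Λ : Type*) (P : Λ → Ideal R) (hP : ∀ l, (P l).IsPrime)
    (hPm : ∀ l, P l ≠ IsLocalRing.maximalIdeal R)
    (E₀ : Type*) [AddCommGroup E₀] [Module R E₀]
    (h₀ : IsInjectiveHull R (R ⧸ IsLocalRing.maximalIdeal R) E₀)
    (E : Λ → Type*) [∀ l, AddCommGroup (E l)] [∀ l, Module R (E l)]
    (hE : ∀ l, IsInjectiveHull R (R ⧸ P l) (E l))
    (f : E₀ →ₗ[R] (DirectSum Λ E)) : f = 0 := by
  obtain ⟨-, i₀, hi₀, hess₀⟩ := h₀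
  refine LinearMap.ext fun x => ?_
  refine DFunLike.ext _ _ fun l => ?_
  obtain ⟨-, iₗ, hiₗ, hessₗ⟩ := hE l
  -- choose z ∈ m \ P l
  have hle : P l < IsLocalRing.maximalIdeal R :=
    lt_of_le_of_ne (IsLocalRing.le_maximalIdeal (hP l).ne_top) (hPm l)
  obtain ⟨z, hzm, hzP⟩ := SetLike.exists_of_lt hle
  obtain ⟨n, hn⟩ := aux_torsion i₀ hi₀ hess₀ z hzm x
  have key : z ^ n • ((f x) l) = 0 := by
    have : f (z ^ n • x) = 0 := by rw [hn, map_zero]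
    rw [map_smul] at this
    calc z ^ n • ((f x) l) = ((z ^ n • f x) l) := by rw [DirectSum.smul_apply]
    _ = 0 := by rw [this]; rfl
  have := aux_pow_smul (aux_inj (hP l) iₗ hiₗ hessₗ z hzP) key
  rw [this]; rfl
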